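/- Let g be the function defined in the context. Then g is continuous on [0, 2l0] and three times continuously differentiable on (0, 2l0], g(0) = 0, and for every r ∈ (0, 2l0] one has g'(r) ≥ 0, g''(r) ≤ 0 and g'''(r) ≥ 0. -/

import Mathlib

open Set Filter MeasureTheory

open scoped Topology

/-- Lemma 4.2 of the paper, first assertion: g(r) = r^θ + c0 ∫₀^r Φ₁(z) z^{θ−2} dz is
continuous on [0,2l0], C³ on (0,2l0], g(0)=0, and g' ≥ 0, g'' ≤ 0, g''' ≥ 0 on (0,2l0]. -/
theorem stmt_6
    (l0 θ c0 : ℝ) (hl0 : 0 < l0) (hθ : θ ∈ Ioc (0:ℝ) 1) (hc0 : 0 < c0)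
    (Φ₁ : ℝ → ℝ)
    (hΦnn : ∀ r ∈ Icc 0 (2 * l0), 0 ≤ Φ₁ r)
    (hΦcont : ContinuousOn Φ₁ (Icc 0 (2 * l0)))
    (hΦsmooth : ContDiffOn ℝ 3 Φ₁ (Ioc 0 (2 * l0)))
    (hΦ0 : Φ₁ 0 = 0)
    (hΦ1 : ∀ r ∈ Ioc 0 (2 * l0), 0 ≤ deriv Φ₁ r)
    (hΦ2 : ∀ r ∈ Ioc 0 (2 * l0), deriv (deriv Φ₁) r ≤ 0)
    (hΦ3 : ∀ r ∈ Ioc 0 (2 * l0), 0 ≤ deriv (deriv (deriv Φ₁)) r)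
    (hint : IntervalIntegrable (fun z => Φ₁ z * z ^ (θ - 2)) volume 0 (2 * l0))
    (g : ℝ → ℝ)
    (hg : ∀ r, g r = r ^ θ + c0 * ∫ z in (0:ℝ)..r, Φ₁ z * z ^ (θ - 2)) :
    ContinuousOn g (Icc 0 (2 * l0)) ∧ ContDiffOn ℝ 3 g (Ioc 0 (2 * l0)) ∧ g 0 = 0 ∧
      ∀ r ∈ Ioc 0 (2 * l0),
        0 ≤ deriv g r ∧ deriv (deriv g) r ≤ 0 ∧ 0 ≤ deriv (deriv (deriv g)) r := by
  obtain ⟨hθ0, hθ1⟩ := hθ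
  set b := 2 * l0 with hbdef
  have hb : 0 < b := by positivity
  have hgE : g = fun r => r ^ θ + c0 * ∫ z in (0:ℝ)..r, Φ₁ z * z ^ (θ - 2) := funext hg
  -- basic set facts
  have hts : Ioo (0:ℝ) b ⊆ Ioc 0 b := Ioo_subset_Ioc_self
  have hsIcc : Ioc (0:ℝ) b ⊆ Icc 0 b := Ioc_subset_Icc_self
  have hto : IsOpen (Ioo (0:ℝ) b) := isOpen_Ioo
  have hsu : UniqueDiffOn ℝ (Ioc (0:ℝ) b) := uniqueDiffOn_Ioc 0 b
  have bmem : b ∈ Ioc (0:ℝ) b := ⟨hb, le_rfl⟩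
  have hub : UniqueDiffWithinAt ℝ (Ioc (0:ℝ) b) b := hsu b bmem
  have hsnbhd : ∀ x ∈ Ioo (0:ℝ) b, Ioc (0:ℝ) b ∈ 𝓝 x := fun x hx =>
    mem_of_superset (hto.mem_nhds hx) hts
  haveI hne : (𝓝[Ioo (0:ℝ) b] b).NeBot := by
    refine mem_closure_iff_nhdsWithin_neBot.mp ?_
    rw [closure_Ioo hb.ne]
    exact ⟨hb.le, le_rfl⟩
  -- smoothness unpacking
  have h3eq : (3 : WithTop ℕ∞) = 2 + 1 := by norm_num
  have h2eq : (2 : WithTop ℕ∞) = 1 + 1 := by norm_num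
  have hΦsm' : ContDiffOn ℝ (2 + 1) Φ₁ (Ioc 0 b) := by rw [← h3eq]; exact hΦsmooth
  obtain ⟨hΦdiff, -, hP1sm⟩ := (contDiffOn_succ_iff_derivWithin hsu).mp hΦsm'
  set P1 : ℝ → ℝ := derivWithin Φ₁ (Ioc 0 b) with hP1def
  have hP1sm' : ContDiffOn ℝ (1 + 1) P1 (Ioc 0 b) := by rw [← h2eq]; exact hP1sm
  obtain ⟨hP1diff, -, hP2sm⟩ := (contDiffOn_succ_iff_derivWithin hsu).mp hP1sm'
  set P2 : ℝ → ℝ := derivWithin P1 (Ioc 0 b) with hP2def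
  have hΦcontS : ContinuousOn Φ₁ (Ioc 0 b) := hΦcont.mono hsIcc
  have hP1cont : ContinuousOn P1 (Ioc 0 b) := hP1sm.continuousOn
  have hP2cont : ContinuousOn P2 (Ioc 0 b) := hP2sm.continuousOn
  -- pointwise identifications on the interior
  have hP1eq : ∀ x ∈ Ioo (0:ℝ) b, P1 x = deriv Φ₁ x := fun x hx => by
    rw [hP1def]; exact derivWithin_of_mem_nhds (hsnbhd x hx)
  have hΦdAt : ∀ x ∈ Ioo (0:ℝ) b, HasDerivAt Φ₁ (P1 x) x := fun x hx => by
    rw [hP1def]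
    exact ((hΦdiff x (hts hx)).hasDerivWithinAt).hasDerivAt (hsnbhd x hx)
  have hP1dAt : ∀ x ∈ Ioo (0:ℝ) b, HasDerivAt P1 (P2 x) x := fun x hx => by
    rw [hP2def]
    exact ((hP1diff x (hts hx)).hasDerivWithinAt).hasDerivAt (hsnbhd x hx)
  have hP2eqt : ∀ x ∈ Ioo (0:ℝ) b, P2 x = deriv (deriv Φ₁) x := fun x hx => by
    rw [hP2def, derivWithin_of_mem_nhds (hsnbhd x hx)]
    exact Filter.EventuallyEq.deriv_eq (Filter.eventuallyEq_of_mem (hto.mem_nhds hx) hP1eq)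
  have hP2dnn : ∀ x ∈ Ioo (0:ℝ) b, 0 ≤ deriv P2 x := fun x hx => by
    have h : deriv P2 x = deriv (deriv (deriv Φ₁)) x :=
      Filter.EventuallyEq.deriv_eq (Filter.eventuallyEq_of_mem (hto.mem_nhds hx) hP2eqt)
    rw [h]; exact hΦ3 x (hts hx)
  have hP2diffAt : ∀ x ∈ Ioo (0:ℝ) b, DifferentiableAt ℝ P2 x := fun x hx =>
    ((hP2sm x (hts hx)).contDiffAt (hsnbhd x hx)).differentiableAt one_ne_zero
  -- signs on the interior
  have hP1nnt : ∀ x ∈ Ioo (0:ℝ) b, 0 ≤ P1 x := fun x hx => by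
    rw [hP1eq x hx]; exact hΦ1 x (hts hx)
  have hP2npt : ∀ x ∈ Ioo (0:ℝ) b, P2 x ≤ 0 := fun x hx => by
    rw [hP2eqt x hx]; exact hΦ2 x (hts hx)
  -- extend signs to the closed right endpoint
  have hP1nn : ∀ x ∈ Ioc (0:ℝ) b, 0 ≤ P1 x := by
    intro x hx
    rcases eq_or_lt_of_le hx.2 with h | h
    · subst h
      exact ge_of_tendsto ((hP1cont b bmem).mono hts)
        (eventually_nhdsWithin_of_forall hP1nnt)
    · exact hP1nnt x ⟨hx.1, h⟩
  have hP2np : ∀ x ∈ Ioc (0:ℝ) b, P2 x ≤ 0 := by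
    intro x hx
    rcases eq_or_lt_of_le hx.2 with h | h
    · subst h
      exact le_of_tendsto ((hP2cont b bmem).mono hts)
        (eventually_nhdsWithin_of_forall hP2npt)
    · exact hP2npt x ⟨hx.1, h⟩
  -- monotonicity of P1 and P2
  have hP1anti : AntitoneOn P1 (Ioc (0:ℝ) b) := by
    apply antitoneOn_of_deriv_nonpos (convex_Ioc 0 b) hP1cont
    · rw [interior_Ioc]
      exact fun x hx => ((hP1dAt x hx).differentiableAt).differentiableWithinAt
    · rw [interior_Ioc]
      intro x hx
      rw [(hP1dAt x hx).deriv]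
      exact hP2npt x hx
  have hP2mono : MonotoneOn P2 (Ioc (0:ℝ) b) := by
    apply monotoneOn_of_deriv_nonneg (convex_Ioc 0 b) hP2cont
    · rw [interior_Ioc]
      exact fun x hx => (hP2diffAt x hx).differentiableWithinAt
    · rw [interior_Ioc]; exact hP2dnn
  -- Key inequality 1 : r * P1 r ≤ Φ₁ r on (0,b]
  have K1 : ∀ r ∈ Ioc (0:ℝ) b, r * P1 r ≤ Φ₁ r := by
    intro r hr
    have hIooT : Ioo (0:ℝ) r ⊆ Ioo 0 b := Ioo_subset_Ioo le_rfl hr.2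
    have mono : MonotoneOn (fun x => Φ₁ x - x * P1 r) (Icc 0 r) := by
      apply monotoneOn_of_deriv_nonneg (convex_Icc 0 r)
      · exact (hΦcont.mono (Icc_subset_Icc le_rfl hr.2)).sub
          ((continuous_id.mul continuous_const).continuousOn)
      · rw [interior_Icc]
        intro x hx
        exact (((hΦdAt x (hIooT hx)).sub
          ((hasDerivAt_id' x).mul_const (P1 r)))).differentiableAt.differentiableWithinAt
      · rw [interior_Icc]
        intro x hx
        rw [(show HasDerivAt (fun x => Φ₁ x - x * P1 r) _ x from
          (hΦdAt x (hIooT hx)).sub ((hasDerivAt_id' x).mul_const (P1 r))).deriv]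
        have h := hP1anti (hts (hIooT hx)) hr hx.2.le
        simp only [one_mul]
        linarith
    have h0r : (0:ℝ) ≤ r := hr.1.le
    have h := mono (left_mem_Icc.mpr h0r) (right_mem_Icc.mpr h0r) h0r
    simp only [hΦ0, zero_mul, sub_zero] at h
    linarith
  -- Key inequality 3 (Taylor-type) : 2 r P1 r ≤ 2 Φ₁ r + r² P2 r on (0,b]
  have K3 : ∀ r ∈ Ioc (0:ℝ) b, 2 * (r * P1 r) ≤ 2 * Φ₁ r + r * r * P2 r := by
    intro r hr
    have hIooT : Ioo (0:ℝ) r ⊆ Ioo 0 b := Ioo_subset_Ioo le_rfl hr.2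
    have hIocS : Ioc (0:ℝ) r ⊆ Ioc 0 b := Ioc_subset_Ioc le_rfl hr.2
    have mono : MonotoneOn (fun x => Φ₁ x - x * P1 x + x * x * P2 r / 2) (Ioc 0 r) := by
      apply monotoneOn_of_deriv_nonneg (convex_Ioc 0 r)
      · exact ((hΦcontS.mono hIocS).sub
          (continuousOn_id.mul (hP1cont.mono hIocS))).add
          (((continuousOn_id.mul continuousOn_id).mul continuousOn_const).div_const 2)
      · rw [interior_Ioc]
        intro x hx
        exact (((hΦdAt x (hIooT hx)).sub ((hasDerivAt_id' x).mul (hP1dAt x (hIooT hx)))).add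
          ((((hasDerivAt_id' x).mul (hasDerivAt_id' x)).mul_const
            (P2 r)).div_const 2)).differentiableAt.differentiableWithinAt
      · rw [interior_Ioc]
        intro x hx
        rw [(show HasDerivAt (fun x => Φ₁ x - x * P1 x + x * x * P2 r / 2) _ x from
          ((hΦdAt x (hIooT hx)).sub ((hasDerivAt_id' x).mul (hP1dAt x (hIooT hx)))).add
          ((((hasDerivAt_id' x).mul (hasDerivAt_id' x)).mul_const (P2 r)).div_const 2)).deriv]
        have h1 : P2 x ≤ P2 r := hP2mono (hIocS ⟨hx.1, hx.2.le⟩) hr hx.2.le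
        have h2 : (0:ℝ) < x := hx.1
        have h3 : x * P2 x ≤ x * P2 r := mul_le_mul_of_nonneg_left h1 h2.le
        simp only [id_eq, one_mul, mul_one]
        linarith
    have key : ∀ x ∈ Ioc (0:ℝ) r, x * x * P2 r / 2 ≤ Φ₁ r - r * P1 r + r * r * P2 r / 2 := by
      intro x hx
      have h := mono hx (right_mem_Ioc.mpr hr.1) hx.2
      have hK1x : x * P1 x ≤ Φ₁ x := K1 x (hIocS hx)
      simp only at h
      linarith
    have h0 : (0:ℝ) ≤ Φ₁ r - r * P1 r + r * r * P2 r / 2 := by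
      have tlim : Tendsto (fun x : ℝ => x * x * P2 r / 2) (𝓝[>] (0:ℝ)) (𝓝 0) := by
        have hc : Tendsto (fun x : ℝ => x * x * P2 r / 2) (𝓝 (0:ℝ))
            (𝓝 (0 * 0 * P2 r / 2)) :=
          (((continuous_id.mul continuous_id).mul continuous_const).div_const 2).tendsto 0
        simpa using hc.mono_left nhdsWithin_le_nhds
      exact le_of_tendsto tlim
        (Filter.eventually_of_mem (Ioc_mem_nhdsGT_of_mem ⟨le_rfl, hr.1⟩) key)
    linarith
  -- the three derivative formulas
  set f1 : ℝ → ℝ := fun x => θ * x ^ (θ-1) + c0 * (Φ₁ x * x ^ (θ-2)) with hf1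
  set f2 : ℝ → ℝ := fun x => θ * ((θ-1) * x ^ (θ-1-1)) +
    c0 * (P1 x * x ^ (θ-2) + Φ₁ x * ((θ-2) * x ^ (θ-2-1))) with hf2
  set f3 : ℝ → ℝ := fun x => θ * ((θ-1) * ((θ-1-1) * x ^ (θ-1-1-1))) +
    c0 * ((P2 x * x ^ (θ-2) + P1 x * ((θ-2) * x ^ (θ-2-1))) +
      (P1 x * ((θ-2) * x ^ (θ-2-1)) + Φ₁ x * ((θ-2) * ((θ-2-1) * x ^ (θ-2-1-1))))) with hf3
  -- sign facts
  have S1 : ∀ r ∈ Ioc (0:ℝ) b, 0 ≤ f1 r := by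
    intro r hr
    simp only [hf1]
    have h1 : (0:ℝ) ≤ r ^ (θ-1) := Real.rpow_nonneg hr.1.le _
    have h2 : (0:ℝ) ≤ r ^ (θ-2) := Real.rpow_nonneg hr.1.le _
    have h3 := hΦnn r (hsIcc hr)
    have h4 : 0 ≤ θ * r ^ (θ-1) := mul_nonneg hθ0.le h1
    have h5 : 0 ≤ c0 * (Φ₁ r * r ^ (θ-2)) := mul_nonneg hc0.le (mul_nonneg h3 h2)
    linarith
  have S2 : ∀ r ∈ Ioc (0:ℝ) b, f2 r ≤ 0 := by
    intro r hr
    have hr0 : (0:ℝ) < r := hr.1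
    have e1 : r ^ (θ-1-1) = r ^ (θ-3) * r := by
      rw [show θ-1-1 = (θ-3)+1 by ring, Real.rpow_add hr0, Real.rpow_one]
    have e2 : r ^ (θ-2) = r ^ (θ-3) * r := by
      rw [show θ-2 = (θ-3)+1 by ring, Real.rpow_add hr0, Real.rpow_one]
    have e3 : r ^ (θ-2-1) = r ^ (θ-3) := by rw [show θ-2-1 = θ-3 by ring]
    have hA : (0:ℝ) ≤ r ^ (θ-3) := Real.rpow_nonneg hr0.le _
    have hK1 := K1 r hr
    have hΦr := hΦnn r (hsIcc hr)
    have hi : P1 r * r + Φ₁ r * (θ-2) ≤ 0 := by nlinarith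
    have inner : θ * (θ-1) * r + c0 * (P1 r * r + Φ₁ r * (θ-2)) ≤ 0 := by
      have hx1 : 0 ≤ θ * ((1-θ) * r) :=
        mul_nonneg hθ0.le (mul_nonneg (by linarith) hr0.le)
      have hx2 : c0 * (P1 r * r + Φ₁ r * (θ-2)) ≤ 0 :=
        mul_nonpos_of_nonneg_of_nonpos hc0.le hi
      nlinarith
    calc f2 r = r ^ (θ-3) * (θ * (θ-1) * r + c0 * (P1 r * r + Φ₁ r * (θ-2))) := by
          simp only [hf2]; rw [e1, e2, e3]; ring
      _ ≤ 0 := mul_nonpos_iff.mpr (Or.inl ⟨hA, inner⟩)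
  have S3 : ∀ r ∈ Ioc (0:ℝ) b, 0 ≤ f3 r := by
    intro r hr
    have hr0 : (0:ℝ) < r := hr.1
    have e1 : r ^ (θ-1-1-1) = r ^ (θ-4) * r := by
      rw [show θ-1-1-1 = (θ-4)+1 by ring, Real.rpow_add hr0, Real.rpow_one]
    have e2 : r ^ (θ-2) = r ^ (θ-4) * r * r := by
      rw [show θ-2 = (θ-4)+1+1 by ring, Real.rpow_add hr0, Real.rpow_add hr0, Real.rpow_one]
    have e3 : r ^ (θ-2-1) = r ^ (θ-4) * r := by
      rw [show θ-2-1 = (θ-4)+1 by ring, Real.rpow_add hr0, Real.rpow_one]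
    have e4 : r ^ (θ-2-1-1) = r ^ (θ-4) := by rw [show θ-2-1-1 = θ-4 by ring]
    have hA : (0:ℝ) ≤ r ^ (θ-4) := Real.rpow_nonneg hr0.le _
    have hK1 := K1 r hr
    have hK3 := K3 r hr
    have hP1r := hP1nn r hr
    have hΦr := hΦnn r (hsIcc hr)
    have E : 0 ≤ r * r * P2 r + 2 * (θ-2) * (r * P1 r) + (θ-2) * (θ-3) * Φ₁ r := by
      nlinarith [mul_nonneg (sub_nonneg.mpr hθ1) (sub_nonneg.mpr hK1),
        mul_nonneg (mul_nonneg (sub_nonneg.mpr hθ1) (by linarith : (0:ℝ) ≤ 2 - θ)) hΦr]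
    have X : 0 ≤ θ * (θ-1) * (θ-2) * r +
        c0 * (r * r * P2 r + 2 * (θ-2) * (r * P1 r) + (θ-2) * (θ-3) * Φ₁ r) := by
      have h1 : 0 ≤ θ * (θ-1) * (θ-2) * r := by
        nlinarith [mul_nonneg (mul_nonneg hθ0.le hr0.le)
          (mul_nonneg (sub_nonneg.mpr hθ1) (by linarith : (0:ℝ) ≤ 2 - θ))]
      nlinarith [mul_nonneg hc0.le E]
    calc (0:ℝ) ≤ r ^ (θ-4) * (θ * (θ-1) * (θ-2) * r +
        c0 * (r * r * P2 r + 2 * (θ-2) * (r * P1 r) + (θ-2) * (θ-3) * Φ₁ r)) :=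
          mul_nonneg hA X
      _ = f3 r := by simp only [hf3]; rw [e1, e2, e3, e4]; ring
  -- continuity of the integrand
  have hφconts : ContinuousOn (fun z => Φ₁ z * z ^ (θ - 2)) (Ioc 0 b) :=
    hΦcontS.mul (fun x hx => (Real.continuousAt_rpow_const x _ (Or.inl hx.1.ne')).continuousWithinAt)
  have hφcontt : ContinuousOn (fun z => Φ₁ z * z ^ (θ - 2)) (Ioo (0:ℝ) b) := hφconts.mono hts
  -- FTC: derivative of the primitive
  have hGdAt : ∀ r ∈ Ioo (0:ℝ) b,
      HasDerivAt (fun u => ∫ z in (0:ℝ)..u, Φ₁ z * z ^ (θ - 2)) (Φ₁ r * r ^ (θ - 2)) r := by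
    intro r hr
    have hii : IntervalIntegrable (fun z => Φ₁ z * z ^ (θ - 2)) volume 0 r :=
      hint.mono_set (by
        rw [uIcc_of_le hr.1.le, uIcc_of_le hb.le]
        exact Icc_subset_Icc le_rfl hr.2.le)
    exact intervalIntegral.integral_hasDerivAt_right hii
      (hφcontt.stronglyMeasurableAtFilter hto r hr)
      ((hφcontt r hr).continuousAt (hto.mem_nhds hr))
  have smem : Ioc (0:ℝ) b ∈ 𝓝[Iic b] b := by
    rw [← Ioi_inter_Iic]
    exact Filter.inter_mem (mem_nhdsWithin_of_mem_nhds (Ioi_mem_nhds hb)) self_mem_nhdsWithin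
  have hGdWb : HasDerivWithinAt (fun u => ∫ z in (0:ℝ)..u, Φ₁ z * z ^ (θ - 2))
      (Φ₁ b * b ^ (θ - 2)) (Ioc 0 b) b := by
    have H : HasDerivWithinAt (fun u => ∫ z in (0:ℝ)..u, Φ₁ z * z ^ (θ - 2))
        (Φ₁ b * b ^ (θ - 2)) (Iic b) b :=
      intervalIntegral.integral_hasDerivWithinAt_right (s := Iic b) (t := Iic b) hint
        ⟨Ioc 0 b, smem, hφconts.aestronglyMeasurable measurableSet_Ioc⟩
        ((hφconts b bmem).mono_of_mem_nhdsWithin smem)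
    exact H.mono Ioc_subset_Iic_self
  have hrpowAt : ∀ (p : ℝ), ∀ r : ℝ, 0 < r → HasDerivAt (fun x : ℝ => x ^ p) (p * r ^ (p-1)) r :=
    fun p r hr => Real.hasDerivAt_rpow_const (Or.inl hr.ne')
  -- derivatives of g and its derivatives on the interior
  have hgd : ∀ r ∈ Ioo (0:ℝ) b, HasDerivAt g (f1 r) r := by
    intro r hr
    rw [hgE]
    simp only [hf1]
    exact (hrpowAt θ r hr.1).add ((hGdAt r hr).const_mul c0)
  have hf1d : ∀ r ∈ Ioo (0:ℝ) b, HasDerivAt f1 (f2 r) r := by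
    intro r hr
    simp only [hf1, hf2]
    exact ((hrpowAt (θ-1) r hr.1).const_mul θ).add
      (((hΦdAt r hr).mul (hrpowAt (θ-2) r hr.1)).const_mul c0)
  have hf2d : ∀ r ∈ Ioo (0:ℝ) b, HasDerivAt f2 (f3 r) r := by
    intro r hr
    simp only [hf2, hf3]
    exact (((hrpowAt (θ-1-1) r hr.1).const_mul (θ-1)).const_mul θ).add
      ((((hP1dAt r hr).mul (hrpowAt (θ-2) r hr.1)).add
        ((hΦdAt r hr).mul ((hrpowAt (θ-2-1) r hr.1).const_mul (θ-2)))).const_mul c0)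
  have H1 : ∀ x ∈ Ioo (0:ℝ) b, deriv g x = f1 x := fun x hx => (hgd x hx).deriv
  have hdgd : ∀ r ∈ Ioo (0:ℝ) b, HasDerivAt (deriv g) (f2 r) r := fun r hr =>
    (hf1d r hr).congr_of_eventuallyEq (Filter.eventuallyEq_of_mem (hto.mem_nhds hr) H1)
  have H2 : ∀ x ∈ Ioo (0:ℝ) b, deriv (deriv g) x = f2 x := fun x hx => (hdgd x hx).deriv
  have hddgd : ∀ r ∈ Ioo (0:ℝ) b, HasDerivAt (deriv (deriv g)) (f3 r) r := fun r hr =>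
    (hf2d r hr).congr_of_eventuallyEq (Filter.eventuallyEq_of_mem (hto.mem_nhds hr) H2)
  have H3 : ∀ x ∈ Ioo (0:ℝ) b, deriv (deriv (deriv g)) x = f3 x := fun x hx => (hddgd x hx).deriv
  -- one-sided derivatives at b
  have hgdWb : HasDerivWithinAt g (f1 b) (Ioc 0 b) b := by
    rw [hgE]
    simp only [hf1]
    exact ((hrpowAt θ b hb).hasDerivWithinAt).add (hGdWb.const_mul c0)
  have hΦdWb : HasDerivWithinAt Φ₁ (P1 b) (Ioc 0 b) b := by
    rw [hP1def]; exact (hΦdiff b bmem).hasDerivWithinAt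
  have hP1dWb : HasDerivWithinAt P1 (P2 b) (Ioc 0 b) b := by
    rw [hP2def]; exact (hP1diff b bmem).hasDerivWithinAt
  have hf1dWb : HasDerivWithinAt f1 (f2 b) (Ioc 0 b) b := by
    simp only [hf1, hf2]
    exact (((hrpowAt (θ-1) b hb).hasDerivWithinAt).const_mul θ).add
      ((hΦdWb.mul ((hrpowAt (θ-2) b hb).hasDerivWithinAt)).const_mul c0)
  have hf2dWb : HasDerivWithinAt f2 (f3 b) (Ioc 0 b) b := by
    simp only [hf2, hf3]
    exact ((((hrpowAt (θ-1-1) b hb).hasDerivWithinAt).const_mul (θ-1)).const_mul θ).add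
      (((hP1dWb.mul ((hrpowAt (θ-2) b hb).hasDerivWithinAt)).add
        (hΦdWb.mul (((hrpowAt (θ-2-1) b hb).hasDerivWithinAt).const_mul (θ-2)))).const_mul c0)
  -- continuity of f1, f2 on (0,b]
  have hrpc : ∀ p : ℝ, ContinuousOn (fun x : ℝ => x ^ p) (Ioc (0:ℝ) b) := fun p x hx =>
    (Real.continuousAt_rpow_const x p (Or.inl hx.1.ne')).continuousWithinAt
  have hf1cont : ContinuousOn f1 (Ioc (0:ℝ) b) := by
    simp only [hf1]
    exact (continuousOn_const.mul (hrpc _)).add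
      (continuousOn_const.mul (hΦcontS.mul (hrpc _)))
  have hf2cont : ContinuousOn f2 (Ioc (0:ℝ) b) := by
    simp only [hf2]
    exact (continuousOn_const.mul (continuousOn_const.mul (hrpc _))).add
      (continuousOn_const.mul ((hP1cont.mul (hrpc _)).add
        (hΦcontS.mul (continuousOn_const.mul (hrpc _)))))
  -- endpoint computation of derivatives
  have key_endpoint : ∀ (F D E : ℝ → ℝ), (∀ x ∈ Ioo (0:ℝ) b, F x = D x) →
      ContinuousOn D (Ioc 0 b) → HasDerivWithinAt D (E b) (Ioc 0 b) b →
      DifferentiableAt ℝ F b → deriv F b = E b := by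
    intro F D E hFD hDcont hDd hFdiff
    have hFb : F b = D b := by
      have t1 : Tendsto F (𝓝[Ioo (0:ℝ) b] b) (𝓝 (F b)) :=
        (hFdiff.continuousAt).continuousWithinAt.mono hts
      have t2 : Tendsto D (𝓝[Ioo (0:ℝ) b] b) (𝓝 (D b)) := (hDcont b bmem).mono hts
      have t1' : Tendsto D (𝓝[Ioo (0:ℝ) b] b) (𝓝 (F b)) :=
        t1.congr' (eventually_nhdsWithin_of_forall hFD)
      exact tendsto_nhds_unique t1' t2
    have hFD' : ∀ x ∈ Ioc (0:ℝ) b, D x = F x := by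
      intro x hx
      rcases eq_or_lt_of_le hx.2 with h | h
      · subst h; exact hFb.symm
      · exact (hFD x ⟨hx.1, h⟩).symm
    have hw : HasDerivWithinAt D (deriv F b) (Ioc (0:ℝ) b) b :=
      ((hFdiff.hasDerivAt.hasDerivWithinAt).congr hFD' hFb.symm)
    exact ((hw.derivWithin hub).symm.trans (hDd.derivWithin hub))
  -- assemble the four claims
  refine ⟨?_, ?_, ?_, ?_⟩
  · -- continuity on [0,b]
    rw [hgE]
    have hInt : IntegrableOn (fun z => Φ₁ z * z ^ (θ - 2)) (Icc 0 b) volume := by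
      rw [integrableOn_Icc_iff_integrableOn_Ioc]
      exact (intervalIntegrable_iff_integrableOn_Ioc_of_le hb.le).mp hint
    have hGc : ContinuousOn (fun u => ∫ z in (0:ℝ)..u, Φ₁ z * z ^ (θ - 2)) (Icc 0 b) := by
      have h := intervalIntegral.continuousOn_primitive_interval
        (a := 0) (b := b) (μ := volume) (f := fun z => Φ₁ z * z ^ (θ - 2))
        (by rwa [uIcc_of_le hb.le])
      rwa [uIcc_of_le hb.le] at h
    exact ContinuousOn.add
      (fun x _ => (Real.continuousAt_rpow_const x θ (Or.inr hθ0.le)).continuousWithinAt)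
      (continuousOn_const.mul hGc)
  · -- C³ on (0,b]
    rw [h3eq]
    apply (contDiffOn_succ_iff_derivWithin hsu).mpr
    refine ⟨?_, ?_, ?_⟩
    · intro x hx
      rcases eq_or_lt_of_le hx.2 with h | h
      · subst h; exact hgdWb.differentiableWithinAt
      · exact ((hgd x ⟨hx.1, h⟩).differentiableAt).differentiableWithinAt
    · intro h; exact absurd h (by simp)
    · have hD : ∀ x ∈ Ioc (0:ℝ) b, derivWithin g (Ioc 0 b) x = f1 x := by
        intro x hx
        rcases eq_or_lt_of_le hx.2 with h | h
        · subst h; exact hgdWb.derivWithin hub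
        · rw [derivWithin_of_mem_nhds (hsnbhd x ⟨hx.1, h⟩)]
          exact H1 x ⟨hx.1, h⟩
      have hrp2 : ∀ p : ℝ, ContDiffOn ℝ 2 (fun x : ℝ => x ^ p) (Ioc (0:ℝ) b) := fun p x hx =>
        (Real.contDiffAt_rpow_const_of_ne hx.1.ne').contDiffWithinAt
      have hf1cd : ContDiffOn ℝ 2 f1 (Ioc (0:ℝ) b) := by
        simp only [hf1]
        exact (contDiffOn_const.mul (hrp2 _)).add
          (contDiffOn_const.mul ((hΦsmooth.of_le (by norm_num)).mul (hrp2 _)))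
      exact hf1cd.congr hD
  · -- g 0 = 0
    rw [hg, intervalIntegral.integral_same, Real.zero_rpow hθ0.ne']
    ring
  · -- the sign conditions
    intro r hr
    rcases eq_or_lt_of_le hr.2 with h | h
    · subst h
      refine ⟨?_, ?_, ?_⟩
      · by_cases hdg : DifferentiableAt ℝ g b
        · have h' : deriv g b = f1 b :=
            ((hdg.hasDerivAt.hasDerivWithinAt).derivWithin hub).symm.trans
              (hgdWb.derivWithin hub)
          rw [h']; exact S1 b bmem
        · rw [deriv_zero_of_not_differentiableAt hdg]
      · by_cases hdg : DifferentiableAt ℝ (deriv g) b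
        · rw [key_endpoint (deriv g) f1 f2 H1 hf1cont hf1dWb hdg]
          exact S2 b bmem
        · rw [deriv_zero_of_not_differentiableAt hdg]
      · by_cases hdg : DifferentiableAt ℝ (deriv (deriv g)) b
        · rw [key_endpoint (deriv (deriv g)) f2 f3 H2 hf2cont hf2dWb hdg]
          exact S3 b bmem
        · rw [deriv_zero_of_not_differentiableAt hdg]
    · have hrt : r ∈ Ioo (0:ℝ) b := ⟨hr.1, h⟩
      exact ⟨by rw [H1 r hrt]; exact S1 r hr,
        by rw [H2 r hrt]; exact S2 r hr,
        by rw [H3 r hrt]; exact S3 r hr⟩
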